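/- arXiv:1102.1165 — 2 statements merged into one kernel-verified Lean document; each statement's English description precedes it below -/
import Mathlib

section
/- With the parameters, random variables, and definitions of the Gaussian scheme below, assuming Ũ, W₁, W₂, S₀, S₁′, S₂′, Z are square-integrable with mean zero and Var(Ũ) = Var(W₁) = Var(W₂) = 1, Var(S₀) = Q₀, Var(S₁′) = Q₁′, Var(S₂′) = Q₂′, Var(Z) = N, the residuals φ₁ and φ₂ are uncorrelated with the channel output: E[φ₁ · Y] = 0 and E[φ₂ · Y] = 0. -/
open MeasureTheory ProbabilityTheory Real

private lemma integrable_mul_of_memL2 {Ω : Type*} [MeasurableSpace Ω] {μ : Measure Ω}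
    {f g : Ω → ℝ} (hf : MemLp f 2 μ) (hg : MemLp g 2 μ) :
    Integrable (fun ω => f ω * g ω) μ := by
  have h : MemLp (g • f) 1 μ := hf.smul hg
  rw [memLp_one_iff_integrable] at h
  exact h.congr (Filter.Eventually.of_forall fun ω => by
    simp [Pi.smul_apply, smul_eq_mul, mul_comm])

private lemma orth_expand {Ω : Type*} [MeasurableSpace Ω] (μ : Measure Ω)
    [IsProbabilityMeasure μ] (X : Fin 7 → Ω → ℝ)
    (hX2 : ∀ i, MemLp (X i) 2 μ)
    (hcross : ∀ i j, i ≠ j → ∫ ω, X i ω * X j ω ∂μ = 0)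
    (c d : Fin 7 → ℝ) :
    ∫ ω, (∑ i, c i * X i ω) * (∑ j, d j * X j ω) ∂μ
      = ∑ i, c i * d i * ∫ ω, X i ω * X i ω ∂μ := by
  have hint : ∀ i j : Fin 7, Integrable (fun ω => c i * d j * (X i ω * X j ω)) μ :=
    fun i j => (integrable_mul_of_memL2 (hX2 i) (hX2 j)).const_mul _
  calc ∫ ω, (∑ i, c i * X i ω) * (∑ j, d j * X j ω) ∂μ
      = ∫ ω, ∑ i, ∑ j, c i * d j * (X i ω * X j ω) ∂μ := by
        congr 1; funext ω
        rw [Finset.sum_mul_sum]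
        exact Finset.sum_congr rfl fun i _ => Finset.sum_congr rfl fun j _ => by ring
    _ = ∑ i, ∑ j, ∫ ω, c i * d j * (X i ω * X j ω) ∂μ := by
        rw [integral_finset_sum _ (fun i _ => integrable_finset_sum _ (fun j _ => hint i j))]
        exact Finset.sum_congr rfl fun i _ => integral_finset_sum _ (fun j _ => hint i j)
    _ = ∑ i, ∑ j, c i * d j * ∫ ω, X i ω * X j ω ∂μ := by
        exact Finset.sum_congr rfl fun i _ => Finset.sum_congr rfl fun j _ =>
          integral_const_mul _ _
    _ = ∑ i, c i * d i * ∫ ω, X i ω * X i ω ∂μ := by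
        refine Finset.sum_congr rfl fun i _ => ?_
        rw [Finset.sum_eq_single i]
        · intro j _ hj; rw [hcross i j (Ne.symm hj), mul_zero]
        · intro h; exact absurd (Finset.mem_univ i) h

set_option maxHeartbeats 1000000 in
/-- Orthogonality claims `E[φ₁·Y] = 0` and `E[φ₂·Y] = 0` (cases j = 1, 2) used in Lemma 1. -/
theorem residual_phi1_phi2_uncorrelated_with_output
    {Ω : Type*} [MeasurableSpace Ω] (μ : Measure Ω) [IsProbabilityMeasure μ]
    (P₁ P₂ Q₀ Q₁' Q₂' N : ℝ) (hP₁ : 0 < P₁) (hP₂ : 0 < P₂)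
    (hQ₀ : 0 < Q₀) (hQ₁' : 0 < Q₁') (hQ₂' : 0 < Q₂') (hN : 0 < N)
    (α₁ α₂ : ℝ) (hα₁ : α₁ ∈ Set.Icc (0 : ℝ) 1) (hα₂ : α₂ ∈ Set.Icc (0 : ℝ) 1)
    (η₁ η₂ : ℝ) (hη₁ : η₁ ∈ Set.Ioc (0 : ℝ) 1) (hη₂ : η₂ ∈ Set.Ioc (0 : ℝ) 1)
    (a b₁ b₂ D γ₀ γ₁ γ₂ γ₀₁ γ₀₂ : ℝ)
    (ha : a = Real.sqrt (α₁ * η₁ * P₁) + Real.sqrt (α₂ * η₂ * P₂))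
    (hb₁ : b₁ = Real.sqrt ((1 - α₁) * η₁ * P₁))
    (hb₂ : b₂ = Real.sqrt ((1 - α₂) * η₂ * P₂))
    (hD : D = a ^ 2 + b₁ ^ 2 + b₂ ^ 2 + Q₁' + Q₂' + N)
    (hγ₀ : γ₀ = a / D)
    (hγ₁ : γ₁ = b₁ / (b₁ ^ 2 + b₂ ^ 2 + Q₂' + N))
    (hγ₂ : γ₂ = b₂ / (b₁ ^ 2 + b₂ ^ 2 + Q₁' + N))
    (hγ₀₁ : γ₀₁ = (b₁ + γ₁ * Q₁') / D)
    (hγ₀₂ : γ₀₂ = (b₂ + γ₂ * Q₂') / D)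
    (U W₁ W₂ S₀ S₁' S₂' Z : Ω → ℝ)
    (hindep : iIndepFun ![U, W₁, W₂, S₀, S₁', S₂', Z] μ)
    (Y φ₀ φ₁ φ₂ : Ω → ℝ)
    (hY : ∀ ω, Y ω = a * U ω + b₁ * W₁ ω + b₂ * W₂ ω + S₀ ω + S₁' ω + S₂' ω + Z ω)
    (hφ₀ : ∀ ω, φ₀ ω = U ω - γ₀ * (Y ω - S₀ ω))
    (hφ₁ : ∀ ω, φ₁ ω = W₁ ω + γ₁ * S₁' ω - γ₀₁ * (Y ω - S₀ ω))
    (hφ₂ : ∀ ω, φ₂ ω = W₂ ω + γ₂ * S₂' ω - γ₀₂ * (Y ω - S₀ ω))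
    (hU2 : MemLp U 2 μ) (hW₁2 : MemLp W₁ 2 μ) (hW₂2 : MemLp W₂ 2 μ)
    (hS₀2 : MemLp S₀ 2 μ) (hS₁'2 : MemLp S₁' 2 μ) (hS₂'2 : MemLp S₂' 2 μ) (hZ2 : MemLp Z 2 μ)
    (hUm : ∫ ω, U ω ∂μ = 0) (hW₁m : ∫ ω, W₁ ω ∂μ = 0) (hW₂m : ∫ ω, W₂ ω ∂μ = 0)
    (hS₀m : ∫ ω, S₀ ω ∂μ = 0) (hS₁'m : ∫ ω, S₁' ω ∂μ = 0) (hS₂'m : ∫ ω, S₂' ω ∂μ = 0)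
    (hZm : ∫ ω, Z ω ∂μ = 0)
    (hUv : variance U μ = 1) (hW₁v : variance W₁ μ = 1) (hW₂v : variance W₂ μ = 1)
    (hS₀v : variance S₀ μ = Q₀) (hS₁'v : variance S₁' μ = Q₁') (hS₂'v : variance S₂' μ = Q₂')
    (hZv : variance Z μ = N)
    : (∫ ω, φ₁ ω * Y ω ∂μ = 0) ∧ (∫ ω, φ₂ ω * Y ω ∂μ = 0) := by
  set X : Fin 7 → Ω → ℝ := ![U, W₁, W₂, S₀, S₁', S₂', Z] with hXdef
  have e0 : X 0 = U := rfl
  have e1 : X 1 = W₁ := rfl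
  have e2 : X 2 = W₂ := rfl
  have e3 : X 3 = S₀ := rfl
  have e4 : X 4 = S₁' := rfl
  have e5 : X 5 = S₂' := rfl
  have e6 : X 6 = Z := rfl
  have hX2 : ∀ i, MemLp (X i) 2 μ := by
    intro i; fin_cases i <;> assumption
  have hXm : ∀ i, ∫ ω, X i ω ∂μ = 0 := by
    intro i; fin_cases i <;> assumption
  have hcross : ∀ i j, i ≠ j → ∫ ω, X i ω * X j ω ∂μ = 0 := by
    intro i j hij
    have h := (hindep.indepFun hij).integral_mul_eq_mul_integral
      (hX2 i).aestronglyMeasurable (hX2 j).aestronglyMeasurable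
    rw [show (fun ω => X i ω * X j ω) = (X i * X j) from rfl, h, hXm i, zero_mul]
  have hsq : ∀ i, ∫ ω, X i ω * X i ω ∂μ = variance (X i) μ := by
    intro i
    rw [variance_eq_sub (hX2 i), hXm i]
    simp [Pi.pow_apply, pow_two]
  have hD0' : a ^ 2 + b₁ ^ 2 + b₂ ^ 2 + Q₁' + Q₂' + N ≠ 0 := by positivity
  have key := orth_expand μ X hX2 hcross
  have hYc : ∀ ω, Y ω = ∑ i, (![a, b₁, b₂, 1, 1, 1, 1] : Fin 7 → ℝ) i * X i ω := by
    intro ω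
    rw [hY, Fin.sum_univ_seven]
    show _ = a * U ω + b₁ * W₁ ω + b₂ * W₂ ω + 1 * S₀ ω + 1 * S₁' ω + 1 * S₂' ω + 1 * Z ω
    ring
  constructor
  · have hφ₁c : ∀ ω, φ₁ ω =
        ∑ i, (![-(γ₀₁*a), 1-γ₀₁*b₁, -(γ₀₁*b₂), 0, γ₁-γ₀₁, -γ₀₁, -γ₀₁] : Fin 7 → ℝ) i * X i ω := by
      intro ω
      rw [hφ₁, hY, Fin.sum_univ_seven]
      show _ = -(γ₀₁*a) * U ω + (1-γ₀₁*b₁) * W₁ ω + -(γ₀₁*b₂) * W₂ ω + 0 * S₀ ω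
        + (γ₁-γ₀₁) * S₁' ω + -γ₀₁ * S₂' ω + -γ₀₁ * Z ω
      ring
    have heq : ∫ ω, φ₁ ω * Y ω ∂μ
        = ∑ i, (![-(γ₀₁*a), 1-γ₀₁*b₁, -(γ₀₁*b₂), 0, γ₁-γ₀₁, -γ₀₁, -γ₀₁] : Fin 7 → ℝ) i
            * (![a, b₁, b₂, 1, 1, 1, 1] : Fin 7 → ℝ) i * ∫ ω, X i ω * X i ω ∂μ := by
      rw [← key]
      congr 1; funext ω; rw [hφ₁c ω, hYc ω]
    rw [heq, Fin.sum_univ_seven]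
    simp only [hsq]
    simp only [e0, e1, e2, e3, e4, e5, e6, hUv, hW₁v, hW₂v, hS₀v, hS₁'v, hS₂'v, hZv]
    show -(γ₀₁*a) * a * 1 + (1-γ₀₁*b₁) * b₁ * 1 + -(γ₀₁*b₂) * b₂ * 1 + 0 * 1 * Q₀
      + (γ₁-γ₀₁) * 1 * Q₁' + -γ₀₁ * 1 * Q₂' + -γ₀₁ * 1 * N = 0
    rw [hγ₀₁, hD]
    field_simp
    ring
  · have hφ₂c : ∀ ω, φ₂ ω =
        ∑ i, (![-(γ₀₂*a), -(γ₀₂*b₁), 1-γ₀₂*b₂, 0, -γ₀₂, γ₂-γ₀₂, -γ₀₂] : Fin 7 → ℝ) i * X i ω := by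
      intro ω
      rw [hφ₂, hY, Fin.sum_univ_seven]
      show _ = -(γ₀₂*a) * U ω + -(γ₀₂*b₁) * W₁ ω + (1-γ₀₂*b₂) * W₂ ω + 0 * S₀ ω
        + -γ₀₂ * S₁' ω + (γ₂-γ₀₂) * S₂' ω + -γ₀₂ * Z ω
      ring
    have heq : ∫ ω, φ₂ ω * Y ω ∂μ
        = ∑ i, (![-(γ₀₂*a), -(γ₀₂*b₁), 1-γ₀₂*b₂, 0, -γ₀₂, γ₂-γ₀₂, -γ₀₂] : Fin 7 → ℝ) i
            * (![a, b₁, b₂, 1, 1, 1, 1] : Fin 7 → ℝ) i * ∫ ω, X i ω * X i ω ∂μ := by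
      rw [← key]
      congr 1; funext ω; rw [hφ₂c ω, hYc ω]
    rw [heq, Fin.sum_univ_seven]
    simp only [hsq]
    simp only [e0, e1, e2, e3, e4, e5, e6, hUv, hW₁v, hW₂v, hS₀v, hS₁'v, hS₂'v, hZv]
    show -(γ₀₂*a) * a * 1 + -(γ₀₂*b₁) * b₁ * 1 + (1-γ₀₂*b₂) * b₂ * 1 + 0 * 1 * Q₀
      + -γ₀₂ * 1 * Q₁' + (γ₂-γ₀₂) * 1 * Q₂' + -γ₀₂ * 1 * N = 0
    rw [hγ₀₂, hD]
    field_simp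
    ring
end

section
/- Let Ω be a finite probability space and let U, V₁, V₂, S₁, S₂ be random variables on Ω taking values in nonempty finite types. Assume the two Markov chains (S₂,V₂) − (U,S₁) − V₁ (the pair (S₂,V₂) and V₁ are conditionally independent given (U,S₁)) and S₁ − (U,S₂) − V₂ (S₁ and V₂ are conditionally independent given (U,S₂)). Then I(V₁;S₁ | U) + I(V₂;S₂ | U) − I(V₁;V₂ | U) = I((V₁,V₂);(S₁,S₂) | U). -/
open MeasureTheory Real

variable {Ω : Type*} [Fintype Ω] [MeasurableSpace Ω] [MeasurableSingletonClass Ω]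

/-- Shannon entropy `H(X) = Σ_x negMulLog (P(X = x))` of a random variable on a finite
probability space. -/
noncomputable def entropy' {α : Type*} [Fintype α] (μ : Measure Ω) (X : Ω → α) : ℝ :=
  ∑ x : α, Real.negMulLog (μ (X ⁻¹' {x})).toReal

/-- Conditional entropy `H(X|Y) = H(X,Y) − H(Y)`. -/
noncomputable def condEntropy' {α β : Type*} [Fintype α] [Fintype β]
    (μ : Measure Ω) (X : Ω → α) (Y : Ω → β) : ℝ :=
  entropy' μ (fun ω => (X ω, Y ω)) - entropy' μ Y

/-- Conditional mutual information `I(X;Y|Z) = H(X|Z) + H(Y|Z) − H(X,Y|Z)`. -/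
noncomputable def condMutualInfo' {α β γ : Type*} [Fintype α] [Fintype β] [Fintype γ]
    (μ : Measure Ω) (X : Ω → α) (Y : Ω → β) (Z : Ω → γ) : ℝ :=
  condEntropy' μ X Z + condEntropy' μ Y Z - condEntropy' μ (fun ω => (X ω, Y ω)) Z

/-- `X − Z − Y` is a Markov chain: `X` and `Y` are conditionally independent given `Z`, i.e.
`P(X=x, Y=y, Z=z)·P(Z=z) = P(X=x, Z=z)·P(Y=y, Z=z)` for all `x, y, z`. -/
def IsMarkovChain {α β γ : Type*} (μ : Measure Ω) (X : Ω → α) (Z : Ω → γ) (Y : Ω → β) : Prop :=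
  ∀ (x : α) (y : β) (z : γ),
    (μ (X ⁻¹' {x} ∩ Y ⁻¹' {y} ∩ Z ⁻¹' {z})).toReal * (μ (Z ⁻¹' {z})).toReal =
      (μ (X ⁻¹' {x} ∩ Z ⁻¹' {z})).toReal * (μ (Y ⁻¹' {y} ∩ Z ⁻¹' {z})).toReal

lemma marginal' (μ : Measure Ω) [IsProbabilityMeasure μ] {β : Type*} [Fintype β]
    (s : Set Ω) (B : Ω → β) :
    ∑ b : β, (μ (s ∩ B ⁻¹' {b})).toReal = (μ s).toReal := by
  have hμ : μ s = ∑ b : β, μ (s ∩ B ⁻¹' {b}) := by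
    have hs : s = ⋃ b ∈ (Finset.univ : Finset β), s ∩ B ⁻¹' {b} := by
      ext ω; simp
    conv_lhs => rw [hs]
    rw [measure_biUnion_finset]
    · intro b _ b' _ hbb
      refine Set.disjoint_left.2 fun ω hω hω' => hbb ?_
      have h1 : B ω = b := hω.2
      have h2 : B ω = b' := hω'.2
      rw [← h1, h2]
    · exact fun b _ => Set.Finite.measurableSet (Set.toFinite _)
  rw [hμ, ENNReal.toReal_sum (fun _ _ => measure_ne_top μ _)]

omit [Fintype Ω] [MeasurableSingletonClass Ω] in
lemma entropy'_comp {α β : Type*} [Fintype α] [Fintype β] (μ : Measure Ω)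
    (X : Ω → α) (Y : Ω → β) (f : α → β) (hf : Function.Injective f)
    (hXY : ∀ ω, Y ω = f (X ω)) :
    entropy' μ Y = entropy' μ X := by
  classical
  have hY : Y = fun ω => f (X ω) := funext hXY
  subst hY
  unfold entropy'
  calc ∑ y : β, negMulLog (μ ((fun ω => f (X ω)) ⁻¹' {y})).toReal
      = ∑ y ∈ Finset.univ.image f, negMulLog (μ ((fun ω => f (X ω)) ⁻¹' {y})).toReal := by
        refine (Finset.sum_subset (Finset.subset_univ _) ?_).symm
        intro y _ hy
        have h0 : (fun ω => f (X ω)) ⁻¹' {y} = ∅ := by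
          ext ω
          simp only [Set.mem_preimage, Set.mem_singleton_iff, Set.mem_empty_iff_false, iff_false]
          intro h
          exact hy (Finset.mem_image.2 ⟨X ω, Finset.mem_univ _, h⟩)
        simp [h0]
    _ = ∑ x : α, negMulLog (μ ((fun ω => f (X ω)) ⁻¹' {f x})).toReal :=
        Finset.sum_image (fun x _ y _ h => hf h)
    _ = ∑ x : α, negMulLog (μ (X ⁻¹' {x})).toReal := by
        refine Finset.sum_congr rfl fun x _ => ?_
        have : (fun ω => f (X ω)) ⁻¹' {f x} = X ⁻¹' {x} := by
          ext ω; simp [hf.eq_iff]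
        rw [this]

lemma entropy'_condIndep {α β γ : Type*} [Fintype α] [Fintype β] [Fintype γ]
    (μ : Measure Ω) [IsProbabilityMeasure μ] (A : Ω → α) (B : Ω → β) (C : Ω → γ)
    (h : IsMarkovChain μ A C B) :
    entropy' μ (fun ω => (A ω, B ω, C ω)) =
      entropy' μ (fun ω => (A ω, C ω)) + entropy' μ (fun ω => (B ω, C ω)) - entropy' μ C := by
  set p3 : α → β → γ → ℝ := fun a b c => (μ (A ⁻¹' {a} ∩ B ⁻¹' {b} ∩ C ⁻¹' {c})).toReal with hp3
  set pAC : α → γ → ℝ := fun a c => (μ (A ⁻¹' {a} ∩ C ⁻¹' {c})).toReal with hpAC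
  set pBC : β → γ → ℝ := fun b c => (μ (B ⁻¹' {b} ∩ C ⁻¹' {c})).toReal with hpBC
  set pC : γ → ℝ := fun c => (μ (C ⁻¹' {c})).toReal with hpC
  -- marginals
  have hm1 : ∀ a c, ∑ b : β, p3 a b c = pAC a c := by
    intro a c
    simp only [hp3, hpAC]
    rw [← marginal' μ (A ⁻¹' {a} ∩ C ⁻¹' {c}) B]
    refine Finset.sum_congr rfl fun b _ => ?_
    have : A ⁻¹' {a} ∩ B ⁻¹' {b} ∩ C ⁻¹' {c} = A ⁻¹' {a} ∩ C ⁻¹' {c} ∩ B ⁻¹' {b} := by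
      ext ω; simp; tauto
    simp only [hp3, this]
  have hm2 : ∀ b c, ∑ a : α, p3 a b c = pBC b c := by
    intro b c
    simp only [hp3, hpBC]
    rw [← marginal' μ (B ⁻¹' {b} ∩ C ⁻¹' {c}) A]
    refine Finset.sum_congr rfl fun a _ => ?_
    have : A ⁻¹' {a} ∩ B ⁻¹' {b} ∩ C ⁻¹' {c} = B ⁻¹' {b} ∩ C ⁻¹' {c} ∩ A ⁻¹' {a} := by
      ext ω; simp; tauto
    simp only [hp3, this]
  have hm3 : ∀ c, ∑ a : α, ∑ b : β, p3 a b c = pC c := by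
    intro c
    have := marginal' μ (C ⁻¹' {c}) (fun ω => (A ω, B ω))
    rw [Fintype.sum_prod_type] at this
    simp only [hp3, hpC]
    rw [← this]
    refine Finset.sum_congr rfl fun a _ => Finset.sum_congr rfl fun b _ => ?_
    have : A ⁻¹' {a} ∩ B ⁻¹' {b} ∩ C ⁻¹' {c}
        = C ⁻¹' {c} ∩ (fun ω => (A ω, B ω)) ⁻¹' {(a, b)} := by
      ext ω; simp [Prod.ext_iff]; tauto
    simp only [hp3, this]
  -- nonnegativity / monotonicity facts
  have hmono : ∀ {s t : Set Ω}, s ⊆ t → (μ s).toReal ≤ (μ t).toReal := fun hst =>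
    ENNReal.toReal_mono (measure_ne_top μ _) (measure_mono hst)
  -- pointwise identity
  have key : ∀ a b c, negMulLog (p3 a b c)
      = p3 a b c * log (pC c) - p3 a b c * log (pAC a c) - p3 a b c * log (pBC b c) := by
    intro a b c
    by_cases h0 : p3 a b c = 0
    · simp [h0]
    · have hpos : 0 < p3 a b c := lt_of_le_of_ne ENNReal.toReal_nonneg (Ne.symm h0)
      have hAC : 0 < pAC a c := lt_of_lt_of_le hpos (hmono (by intro ω hω; exact ⟨hω.1.1, hω.2⟩))
      have hBC : 0 < pBC b c := lt_of_lt_of_le hpos (hmono (by intro ω hω; exact ⟨hω.1.2, hω.2⟩))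
      have hC : 0 < pC c := lt_of_lt_of_le hpos (hmono (by intro ω hω; exact hω.2))
      have hfac : p3 a b c * pC c = pAC a c * pBC b c := h a b c
      have hlog : log (p3 a b c) + log (pC c) = log (pAC a c) + log (pBC b c) := by
        rw [← Real.log_mul (ne_of_gt hpos) (ne_of_gt hC),
            ← Real.log_mul (ne_of_gt hAC) (ne_of_gt hBC), hfac]
      rw [negMulLog]
      nlinarith [hlog]
  -- express entropies as iterated sums
  have hH3 : entropy' μ (fun ω => (A ω, B ω, C ω)) = ∑ a : α, ∑ b : β, ∑ c : γ, negMulLog (p3 a b c) := by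
    unfold entropy'
    rw [Fintype.sum_prod_type]
    refine Finset.sum_congr rfl fun a _ => ?_
    rw [Fintype.sum_prod_type]
    refine Finset.sum_congr rfl fun b _ => Finset.sum_congr rfl fun c _ => ?_
    have : (fun ω => (A ω, B ω, C ω)) ⁻¹' {(a, b, c)} = A ⁻¹' {a} ∩ B ⁻¹' {b} ∩ C ⁻¹' {c} := by
      ext ω; simp [Prod.ext_iff]; tauto
    rw [this]
  have hHAC : entropy' μ (fun ω => (A ω, C ω)) = ∑ a : α, ∑ c : γ, negMulLog (pAC a c) := by
    unfold entropy'
    rw [Fintype.sum_prod_type]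
    refine Finset.sum_congr rfl fun a _ => Finset.sum_congr rfl fun c _ => ?_
    have : (fun ω => (A ω, C ω)) ⁻¹' {(a, c)} = A ⁻¹' {a} ∩ C ⁻¹' {c} := by
      ext ω; simp [Prod.ext_iff]
    rw [this]
  have hHBC : entropy' μ (fun ω => (B ω, C ω)) = ∑ b : β, ∑ c : γ, negMulLog (pBC b c) := by
    unfold entropy'
    rw [Fintype.sum_prod_type]
    refine Finset.sum_congr rfl fun b _ => Finset.sum_congr rfl fun c _ => ?_
    have : (fun ω => (B ω, C ω)) ⁻¹' {(b, c)} = B ⁻¹' {b} ∩ C ⁻¹' {c} := by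
      ext ω; simp [Prod.ext_iff]
    rw [this]
  have hHC : entropy' μ C = ∑ c : γ, negMulLog (pC c) := rfl
  rw [hH3, hHAC, hHBC, hHC]
  simp only [key]
  rw [show (∑ a : α, ∑ b : β, ∑ c : γ,
      (p3 a b c * log (pC c) - p3 a b c * log (pAC a c) - p3 a b c * log (pBC b c)))
    = (∑ a : α, ∑ b : β, ∑ c : γ, p3 a b c * log (pC c))
      - (∑ a : α, ∑ b : β, ∑ c : γ, p3 a b c * log (pAC a c))
      - (∑ a : α, ∑ b : β, ∑ c : γ, p3 a b c * log (pBC b c)) from by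
        simp [Finset.sum_sub_distrib]]
  have T1 : (∑ a : α, ∑ b : β, ∑ c : γ, p3 a b c * log (pC c))
      = -∑ c : γ, negMulLog (pC c) := by
    have step : ∀ a : α, ∑ b : β, ∑ c : γ, p3 a b c * log (pC c)
        = ∑ c : γ, ∑ b : β, p3 a b c * log (pC c) := fun a => Finset.sum_comm
    simp only [step]
    rw [Finset.sum_comm]
    have : ∀ c : γ, ∑ a : α, ∑ b : β, p3 a b c * log (pC c) = -negMulLog (pC c) := by
      intro c
      have : ∀ a : α, ∑ b : β, p3 a b c * log (pC c) = (∑ b : β, p3 a b c) * log (pC c) :=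
        fun a => (Finset.sum_mul ..).symm
      simp only [this]
      rw [← Finset.sum_mul]
      have hs : ∑ a : α, ∑ b : β, p3 a b c = pC c := hm3 c
      rw [hs, negMulLog]; ring
    simp [this]
  have T2 : (∑ a : α, ∑ b : β, ∑ c : γ, p3 a b c * log (pAC a c))
      = -∑ a : α, ∑ c : γ, negMulLog (pAC a c) := by
    have : ∀ a : α, ∑ b : β, ∑ c : γ, p3 a b c * log (pAC a c)
        = -∑ c : γ, negMulLog (pAC a c) := by
      intro a
      rw [Finset.sum_comm]
      have : ∀ c : γ, ∑ b : β, p3 a b c * log (pAC a c) = -negMulLog (pAC a c) := by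
        intro c
        rw [← Finset.sum_mul, hm1, negMulLog]; ring
      simp [this]
    simp [this]
  have T3 : (∑ a : α, ∑ b : β, ∑ c : γ, p3 a b c * log (pBC b c))
      = -∑ b : β, ∑ c : γ, negMulLog (pBC b c) := by
    rw [Finset.sum_comm]
    have : ∀ b : β, ∑ a : α, ∑ c : γ, p3 a b c * log (pBC b c)
        = -∑ c : γ, negMulLog (pBC b c) := by
      intro b
      rw [Finset.sum_comm]
      have : ∀ c : γ, ∑ a : α, p3 a b c * log (pBC b c) = -negMulLog (pBC b c) := by
        intro c
        rw [← Finset.sum_mul, hm2, negMulLog]; ring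
      simp [this]
    simp [this]
  rw [T1, T2, T3]
  ring

/-- Step (d) in bound (17) of the proof of Theorem 1: if `(S₂,V₂) − (U,S₁) − V₁` and
`S₁ − (U,S₂) − V₂` are Markov chains, then
`I(V₁;S₁|U) + I(V₂;S₂|U) − I(V₁;V₂|U) = I(V₁,V₂;S₁,S₂|U)`. -/
theorem step_d_markov_identity
    (μ : Measure Ω) [IsProbabilityMeasure μ]
    {𝒰 𝒱₁ 𝒱₂ 𝒮₁ 𝒮₂ : Type*} [Fintype 𝒰] [Fintype 𝒱₁] [Fintype 𝒱₂] [Fintype 𝒮₁] [Fintype 𝒮₂]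
    [Nonempty 𝒰] [Nonempty 𝒱₁] [Nonempty 𝒱₂] [Nonempty 𝒮₁] [Nonempty 𝒮₂]
    (U : Ω → 𝒰) (V₁ : Ω → 𝒱₁) (V₂ : Ω → 𝒱₂) (S₁ : Ω → 𝒮₁) (S₂ : Ω → 𝒮₂)
    (hMarkov₁ : IsMarkovChain μ (fun ω => (S₂ ω, V₂ ω)) (fun ω => (U ω, S₁ ω)) V₁)
    (hMarkov₂ : IsMarkovChain μ S₁ (fun ω => (U ω, S₂ ω)) V₂) :
    condMutualInfo' μ V₁ S₁ U + condMutualInfo' μ V₂ S₂ U -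
        condMutualInfo' μ V₁ V₂ U =
      condMutualInfo' μ (fun ω => (V₁ ω, V₂ ω)) (fun ω => (S₁ ω, S₂ ω)) U := by
  have h1 : entropy' μ (fun ω => ((S₂ ω, V₂ ω), V₁ ω, (U ω, S₁ ω)))
      = entropy' μ (fun ω => ((S₂ ω, V₂ ω), (U ω, S₁ ω)))
        + entropy' μ (fun ω => (V₁ ω, (U ω, S₁ ω)))
        - entropy' μ (fun ω => (U ω, S₁ ω)) :=
    entropy'_condIndep μ (fun ω => (S₂ ω, V₂ ω)) V₁ (fun ω => (U ω, S₁ ω)) hMarkov₁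
  have h2 : entropy' μ (fun ω => (S₁ ω, V₂ ω, (U ω, S₂ ω)))
      = entropy' μ (fun ω => (S₁ ω, (U ω, S₂ ω)))
        + entropy' μ (fun ω => (V₂ ω, (U ω, S₂ ω)))
        - entropy' μ (fun ω => (U ω, S₂ ω)) :=
    entropy'_condIndep μ S₁ V₂ (fun ω => (U ω, S₂ ω)) hMarkov₂
  have ea : entropy' μ (fun ω => ((S₂ ω, V₂ ω), V₁ ω, (U ω, S₁ ω)))
      = entropy' μ (fun ω => (((V₁ ω, V₂ ω), (S₁ ω, S₂ ω)), U ω)) := by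
    refine entropy'_comp μ _ _
      (fun x : ((𝒱₁ × 𝒱₂) × (𝒮₁ × 𝒮₂)) × 𝒰 => ((x.1.2.2, x.1.1.2), x.1.1.1, (x.2, x.1.2.1)))
      ?_ (fun ω => rfl)
    intro ⟨⟨⟨v1, v2⟩, s1, s2⟩, u⟩ ⟨⟨⟨v1', v2'⟩, s1', s2'⟩, u'⟩ h
    simp_all [Prod.ext_iff]
  have eb : entropy' μ (fun ω => ((S₂ ω, V₂ ω), (U ω, S₁ ω)))
      = entropy' μ (fun ω => (S₁ ω, V₂ ω, (U ω, S₂ ω))) := by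
    refine entropy'_comp μ _ _
      (fun x : 𝒮₁ × 𝒱₂ × (𝒰 × 𝒮₂) => ((x.2.2.2, x.2.1), (x.2.2.1, x.1))) ?_ (fun ω => rfl)
    intro ⟨s1, v2, u, s2⟩ ⟨s1', v2', u', s2'⟩ h
    simp_all [Prod.ext_iff]
  have ec : entropy' μ (fun ω => (V₁ ω, (U ω, S₁ ω)))
      = entropy' μ (fun ω => ((V₁ ω, S₁ ω), U ω)) := by
    refine entropy'_comp μ _ _
      (fun x : (𝒱₁ × 𝒮₁) × 𝒰 => (x.1.1, (x.2, x.1.2))) ?_ (fun ω => rfl)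
    intro ⟨⟨v1, s1⟩, u⟩ ⟨⟨v1', s1'⟩, u'⟩ h
    simp_all [Prod.ext_iff]
  have ed : entropy' μ (fun ω => (U ω, S₁ ω))
      = entropy' μ (fun ω => (S₁ ω, U ω)) := by
    refine entropy'_comp μ _ _ (fun x : 𝒮₁ × 𝒰 => (x.2, x.1)) ?_ (fun ω => rfl)
    intro ⟨s1, u⟩ ⟨s1', u'⟩ h
    simp_all [Prod.ext_iff]
  have ef : entropy' μ (fun ω => (S₁ ω, (U ω, S₂ ω)))
      = entropy' μ (fun ω => ((S₁ ω, S₂ ω), U ω)) := by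
    refine entropy'_comp μ _ _
      (fun x : (𝒮₁ × 𝒮₂) × 𝒰 => (x.1.1, (x.2, x.1.2))) ?_ (fun ω => rfl)
    intro ⟨⟨s1, s2⟩, u⟩ ⟨⟨s1', s2'⟩, u'⟩ h
    simp_all [Prod.ext_iff]
  have eg : entropy' μ (fun ω => (V₂ ω, (U ω, S₂ ω)))
      = entropy' μ (fun ω => ((V₂ ω, S₂ ω), U ω)) := by
    refine entropy'_comp μ _ _
      (fun x : (𝒱₂ × 𝒮₂) × 𝒰 => (x.1.1, (x.2, x.1.2))) ?_ (fun ω => rfl)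
    intro ⟨⟨v2, s2⟩, u⟩ ⟨⟨v2', s2'⟩, u'⟩ h
    simp_all [Prod.ext_iff]
  have eh : entropy' μ (fun ω => (U ω, S₂ ω))
      = entropy' μ (fun ω => (S₂ ω, U ω)) := by
    refine entropy'_comp μ _ _ (fun x : 𝒮₂ × 𝒰 => (x.2, x.1)) ?_ (fun ω => rfl)
    intro ⟨s2, u⟩ ⟨s2', u'⟩ h
    simp_all [Prod.ext_iff]
  simp only [condMutualInfo', condEntropy']
  linarith [h1, h2, ea, eb, ec, ed, ef, eg, eh]
end
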